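/- (Witt's formula for q-Euler polynomials) Let p be an odd prime and q ∈ ℚ_p with |1 − q|_p < 1. For every n ≥ 0 and every x ∈ ℤ_p, the limit lim_{N→∞} (1/[p^N]_{−q})·Σ_{y=0}^{p^N−1} (x+y)^n (−q)^y exists in ℚ_p and equals the q-Euler polynomial E_{n,q}(x) = Σ_{k=0}^{n} C(n,k)·E_{k,q}·x^{n−k}. -/

import Mathlib

open Filter Finset

variable {p : ℕ} [Fact (Nat.Prime p)]

private lemma aux_norm_le_one {r : ℚ_[p]} (h : ‖r - 1‖ ≤ 1) : ‖r‖ ≤ 1 := by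
  have h2 := Padic.nonarchimedean (r - 1) 1
  simp only [sub_add_cancel, norm_one] at h2
  exact h2.trans (max_le h le_rfl)

private lemma aux_norm_sum_le {r : ℚ_[p]} (hr : ‖r‖ ≤ 1) (m : ℕ) :
    ‖∑ i ∈ range m, r ^ i‖ ≤ 1 := by
  induction m with
  | zero => simp
  | succ m ih =>
    rw [sum_range_succ]
    refine (Padic.nonarchimedean _ _).trans (max_le ih ?_)
    calc ‖r ^ m‖ = ‖r‖ ^ m := norm_pow _ _
      _ ≤ 1 := pow_le_one₀ (norm_nonneg _) hr

private lemma aux_pow_sub_one {r : ℚ_[p]} (hr : ‖r - 1‖ ≤ 1) (i : ℕ) :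
    ‖r ^ i - 1‖ ≤ ‖r - 1‖ := by
  rw [← geom_sum_mul, Padic.padicNormE.mul]
  calc ‖∑ j ∈ range i, r ^ j‖ * ‖r - 1‖ ≤ 1 * ‖r - 1‖ :=
        mul_le_mul_of_nonneg_right (aux_norm_sum_le (aux_norm_le_one hr) i) (norm_nonneg _)
    _ = ‖r - 1‖ := one_mul _

private lemma aux_sum_sub_le {r : ℚ_[p]} (hr : ‖r - 1‖ ≤ 1) (m : ℕ) :
    ‖∑ i ∈ range m, (r ^ i - 1)‖ ≤ ‖r - 1‖ := by
  induction m with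
  | zero => simp
  | succ m ih =>
    rw [sum_range_succ]
    exact (Padic.nonarchimedean _ _).trans (max_le ih (aux_pow_sub_one hr m))

private lemma aux_step {r : ℚ_[p]} (hr : ‖r - 1‖ ≤ 1) :
    ‖r ^ p - 1‖ ≤ ‖r - 1‖ * max ‖(p : ℚ_[p])‖ ‖r - 1‖ := by
  rw [← geom_sum_mul, Padic.padicNormE.mul, mul_comm]
  refine mul_le_mul_of_nonneg_left ?_ (norm_nonneg _)
  have hsplit : (∑ i ∈ range p, r ^ i) = (p : ℚ_[p]) + ∑ i ∈ range p, (r ^ i - 1) := by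
    rw [Finset.sum_sub_distrib]
    simp [card_range]
  rw [hsplit]
  exact (Padic.nonarchimedean _ _).trans (max_le_max le_rfl (aux_sum_sub_le hr p))

private lemma aux_pow_pow {q : ℚ_[p]} (hq : ‖1 - q‖ < 1) (N : ℕ) :
    ‖q ^ p ^ N - 1‖ ≤ ‖1 - q‖ * max ‖(p : ℚ_[p])‖ ‖1 - q‖ ^ N := by
  have hq' : ‖q - 1‖ = ‖1 - q‖ := by rw [← norm_neg]; ring_nf
  set c := max ‖(p : ℚ_[p])‖ ‖1 - q‖ with hc
  have hc0 : 0 ≤ c := le_max_of_le_right (norm_nonneg _)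
  have hc1 : c ≤ 1 := max_le (le_of_lt Padic.norm_p_lt_one) hq.le
  induction N with
  | zero => simp [hq']
  | succ N ih =>
    have hr1 : ‖q ^ p ^ N - 1‖ ≤ ‖1 - q‖ := by
      refine ih.trans ?_
      calc ‖1 - q‖ * c ^ N ≤ ‖1 - q‖ * 1 :=
            mul_le_mul_of_nonneg_left (pow_le_one₀ hc0 hc1) (norm_nonneg _)
        _ = ‖1 - q‖ := mul_one _
    have hr1' : ‖q ^ p ^ N - 1‖ ≤ 1 := hr1.trans hq.le
    have h1 := aux_step hr1'
    have h2 : q ^ p ^ (N + 1) = (q ^ p ^ N) ^ p := by rw [← pow_mul, ← pow_succ]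
    rw [h2]
    refine h1.trans ?_
    have hmax : max ‖(p : ℚ_[p])‖ ‖q ^ p ^ N - 1‖ ≤ c :=
      max_le (le_max_left _ _) (hr1.trans (le_max_right _ _))
    calc ‖q ^ p ^ N - 1‖ * max ‖(p : ℚ_[p])‖ ‖q ^ p ^ N - 1‖
        ≤ (‖1 - q‖ * c ^ N) * c :=
          mul_le_mul ih hmax (le_max_of_le_left (norm_nonneg _)) (by positivity)
      _ = ‖1 - q‖ * c ^ (N + 1) := by ring

private lemma aux_tendsto_pow {q : ℚ_[p]} (hq : ‖1 - q‖ < 1) :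
    Tendsto (fun N : ℕ => q ^ p ^ N) atTop (nhds 1) := by
  rw [tendsto_iff_norm_sub_tendsto_zero]
  set c := max ‖(p : ℚ_[p])‖ ‖1 - q‖ with hc
  have hc0 : 0 ≤ c := le_max_of_le_right (norm_nonneg _)
  have hc1 : c < 1 := max_lt Padic.norm_p_lt_one hq
  have hlim : Tendsto (fun N : ℕ => ‖1 - q‖ * c ^ N) atTop (nhds 0) := by
    have := tendsto_pow_atTop_nhds_zero_of_norm_lt_one (x := c)
      (by rwa [Real.norm_eq_abs, abs_of_nonneg hc0])
    simpa using (this.const_mul ‖1 - q‖)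
  exact squeeze_zero (fun N => norm_nonneg _) (fun N => aux_pow_pow hq N) hlim


private lemma aux_choose {n k j : ℕ} (h : k + j ≤ n) :
    n.choose k * (n - k).choose j = n.choose j * (n - j).choose k := by
  have h1 := Nat.choose_mul (n := n) (k := k + j) (s := k) (Nat.le_add_right _ _)
  have h2 := Nat.choose_mul (n := n) (k := k + j) (s := j) (Nat.le_add_left _ _)
  simp only [Nat.add_sub_cancel, Nat.add_sub_cancel_left] at h1 h2
  rw [← h1, ← h2, Nat.choose_symm_add]

variable {p : ℕ} [Fact (Nat.Prime p)]

private lemma key_step (q : ℚ_[p]) (E : ℕ → ℚ_[p]) (hE0 : E 0 = 1)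
    (hE : ∀ m : ℕ, 1 ≤ m →
      q * ∑ k ∈ range (m + 1), (m.choose k : ℚ_[p]) * E k + E m = 0)
    (n : ℕ) (z : ℚ_[p]) :
    q * (∑ k ∈ range (n + 1), (n.choose k : ℚ_[p]) * E k * (z + 1) ^ (n - k))
      + ∑ k ∈ range (n + 1), (n.choose k : ℚ_[p]) * E k * z ^ (n - k)
      = (1 + q) * z ^ n := by
  have h1 : ∀ k ∈ range (n + 1),
      (n.choose k : ℚ_[p]) * E k * (z + 1) ^ (n - k)
        = ∑ j ∈ range (n + 1),
            (n.choose k : ℚ_[p]) * ((n - k).choose j : ℚ_[p]) * E k * z ^ j := by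
    intro k hk
    have hkn : k ≤ n := by simpa [Nat.lt_succ_iff] using hk
    have hsub : range (n - k + 1) ⊆ range (n + 1) := Finset.range_subset_range.2 (by omega)
    have hexp : (z + 1) ^ (n - k) = ∑ j ∈ range (n + 1), ((n - k).choose j : ℚ_[p]) * z ^ j := by
      rw [add_pow]
      simp only [one_pow, mul_one]
      rw [Finset.sum_subset hsub]
      · apply Finset.sum_congr rfl; intro j hj; ring
      · intro j hj hj'
        have hj2 : n - k + 1 ≤ j := by simpa [Nat.lt_succ_iff, not_lt] using hj'
        simp [Nat.choose_eq_zero_of_lt (by omega : n - k < j)]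
    rw [hexp, Finset.mul_sum]
    apply Finset.sum_congr rfl; intro j hj; ring
  rw [Finset.sum_congr rfl h1, Finset.sum_comm]
  have h2 : ∀ j ∈ range (n + 1),
      (∑ k ∈ range (n + 1), (n.choose k : ℚ_[p]) * ((n - k).choose j : ℚ_[p]) * E k * z ^ j)
        = ((n.choose j : ℚ_[p]) *
            ∑ k ∈ range (n - j + 1), ((n - j).choose k : ℚ_[p]) * E k) * z ^ j := by
    intro j hj
    have hjn : j ≤ n := by simpa [Nat.lt_succ_iff] using hj
    have hsub : range (n - j + 1) ⊆ range (n + 1) := Finset.range_subset_range.2 (by omega)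
    rw [Finset.mul_sum, Finset.sum_mul]
    rw [← Finset.sum_subset hsub]
    · apply Finset.sum_congr rfl
      intro k hk
      have hkn : k ≤ n - j := by simpa [Nat.lt_succ_iff] using hk
      have hcc : n.choose k * (n - k).choose j = n.choose j * (n - j).choose k :=
        aux_choose (by omega)
      have hcast : (n.choose k : ℚ_[p]) * ((n - k).choose j : ℚ_[p])
          = (n.choose j : ℚ_[p]) * ((n - j).choose k : ℚ_[p]) := by exact_mod_cast hcc
      calc (n.choose k : ℚ_[p]) * ((n - k).choose j : ℚ_[p]) * E k * z ^ j
          = ((n.choose k : ℚ_[p]) * ((n - k).choose j : ℚ_[p])) * E k * z ^ j := by ring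
        _ = ((n.choose j : ℚ_[p]) * ((n - j).choose k : ℚ_[p])) * E k * z ^ j := by rw [hcast]
        _ = (n.choose j : ℚ_[p]) * (((n - j).choose k : ℚ_[p]) * E k) * z ^ j := by ring
    · intro k hk hk'
      have hk1 : k ≤ n := by simpa [Nat.lt_succ_iff] using hk
      have hk2 : n - j + 1 ≤ k := by simpa [Nat.lt_succ_iff, not_lt] using hk'
      simp [Nat.choose_eq_zero_of_lt (by omega : n - k < j)]
  rw [Finset.sum_congr rfl h2]
  have h3 : (∑ k ∈ range (n + 1), (n.choose k : ℚ_[p]) * E k * z ^ (n - k))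
      = ∑ j ∈ range (n + 1), (n.choose j : ℚ_[p]) * E (n - j) * z ^ j := by
    rw [← Finset.sum_range_reflect]
    apply Finset.sum_congr rfl
    intro j hj
    have hjn : j ≤ n := by simpa [Nat.lt_succ_iff] using hj
    have e1 : n + 1 - 1 - j = n - j := by omega
    have e2 : n - (n - j) = j := by omega
    rw [e1, e2, Nat.choose_symm hjn]
  rw [h3, Finset.mul_sum, ← Finset.sum_add_distrib]
  have h4 : ∀ j ∈ range (n + 1),
      q * (((n.choose j : ℚ_[p]) * ∑ k ∈ range (n - j + 1), ((n - j).choose k : ℚ_[p]) * E k)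
            * z ^ j)
          + (n.choose j : ℚ_[p]) * E (n - j) * z ^ j
        = (n.choose j : ℚ_[p]) *
            ((q * ∑ k ∈ range (n - j + 1), ((n - j).choose k : ℚ_[p]) * E k) + E (n - j))
            * z ^ j := by
    intro j _; ring
  rw [Finset.sum_congr rfl h4]
  rw [Finset.sum_eq_single_of_mem n (self_mem_range_succ n)]
  · rw [Nat.sub_self, Nat.choose_self]
    have hT : ∑ k ∈ range (0 + 1), ((0 : ℕ).choose k : ℚ_[p]) * E k = 1 := by simp [hE0]
    rw [hT, hE0]
    push_cast
    ring
  · intro j hj hjn'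
    have hj1 : 1 ≤ n - j := by
      have := Finset.mem_range.1 hj; omega
    rw [hE (n - j) hj1]
    simp


private lemma telescope {p : ℕ} [Fact (Nat.Prime p)] (q : ℚ_[p]) (E : ℕ → ℚ_[p])
    (hE0 : E 0 = 1)
    (hE : ∀ m : ℕ, 1 ≤ m →
      q * ∑ k ∈ range (m + 1), (m.choose k : ℚ_[p]) * E k + E m = 0)
    (n : ℕ) (z : ℚ_[p]) (M : ℕ) :
    (1 + q) * ∑ y ∈ range M, (z + (y : ℚ_[p])) ^ n * (-q) ^ y
      = (∑ k ∈ range (n + 1), (n.choose k : ℚ_[p]) * E k * z ^ (n - k))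
        - (-q) ^ M * ∑ k ∈ range (n + 1),
            (n.choose k : ℚ_[p]) * E k * (z + (M : ℚ_[p])) ^ (n - k) := by
  induction M with
  | zero => simp
  | succ M ih =>
    rw [Finset.sum_range_succ, mul_add, ih, pow_succ]
    have hkey := key_step q E hE0 hE n (z + (M : ℚ_[p]))
    push_cast
    simp only [← add_assoc]
    linear_combination (-(-q) ^ M) * hkey

theorem witt_formula_q_euler_polynomials (p : ℕ) [Fact (Nat.Prime p)] (hp : Odd p)
    (q : ℚ_[p]) (hq : ‖1 - q‖ < 1)
    (E : ℕ → ℚ_[p]) (hE0 : E 0 = 1)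
    (hE : ∀ m : ℕ, 1 ≤ m →
      q * ∑ k ∈ range (m + 1), (m.choose k : ℚ_[p]) * E k + E m = 0)
    (n : ℕ) (x : ℤ_[p]) :
    Tendsto (fun N : ℕ =>
        ((1 + q) / (1 - (-q) ^ (p ^ N))) *
          ∑ y ∈ range (p ^ N), ((x + (y : ℤ_[p]) : ℤ_[p]) : ℚ_[p]) ^ n * (-q) ^ y)
      atTop
      (nhds (∑ k ∈ range (n + 1), (n.choose k : ℚ_[p]) * E k * ((x : ℚ_[p]) ^ (n - k)))) := by
  set G : ℚ_[p] → ℚ_[p] := fun z => ∑ k ∈ range (n + 1), (n.choose k : ℚ_[p]) * E k * z ^ (n - k)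
    with hGdef
  -- ‖2‖ = 1
  have hp2 : p ≠ 2 := by
    intro h; rw [h] at hp; exact absurd hp (by decide)
  have h2norm : ‖(2 : ℚ_[p])‖ = 1 := by
    have hle : ‖((2 : ℤ) : ℚ_[p])‖ ≤ 1 := Padic.norm_int_le_one _
    have hlt : ¬ ‖((2 : ℤ) : ℚ_[p])‖ < 1 := by
      rw [Padic.norm_intCast_lt_one_iff]
      intro hdvd
      have hdvd' : p ∣ 2 := by exact_mod_cast hdvd
      have h2 : p ≤ 2 := Nat.le_of_dvd (by norm_num) hdvd'
      have hge : 2 ≤ p := (Fact.out : Nat.Prime p).two_le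
      exact hp2 (le_antisymm h2 hge)
    have : ‖((2 : ℤ) : ℚ_[p])‖ = 1 := le_antisymm hle (not_lt.1 hlt)
    simpa using this
  -- (-q)^(p^N) = -(q^(p^N))
  have hoddpow : ∀ N : ℕ, (-q) ^ (p ^ N) = -(q ^ (p ^ N)) := fun N =>
    Odd.neg_pow (hp.pow) q
  -- q^(p^N) is close to 1
  have hclose : ∀ N : ℕ, ‖q ^ p ^ N - 1‖ < 1 := by
    intro N
    refine lt_of_le_of_lt ((aux_pow_pow hq N).trans ?_) hq
    have hc0 : (0:ℝ) ≤ max ‖(p : ℚ_[p])‖ ‖1 - q‖ := le_max_of_le_right (norm_nonneg _)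
    have hc1 : max ‖(p : ℚ_[p])‖ ‖1 - q‖ ≤ 1 :=
      max_le Padic.norm_p_lt_one.le hq.le
    calc ‖1 - q‖ * max ‖(p : ℚ_[p])‖ ‖1 - q‖ ^ N ≤ ‖1 - q‖ * 1 :=
          mul_le_mul_of_nonneg_left (pow_le_one₀ hc0 hc1) (norm_nonneg _)
      _ = ‖1 - q‖ := mul_one _
  -- denominators nonzero
  have hden : ∀ N : ℕ, (1 : ℚ_[p]) - (-q) ^ (p ^ N) ≠ 0 := by
    intro N h
    rw [hoddpow N, sub_neg_eq_add] at h
    have hqN : q ^ p ^ N = -1 := eq_neg_of_add_eq_zero_right h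
    have hcl := hclose N
    rw [hqN] at hcl
    have h21 : ‖(-1 : ℚ_[p]) - 1‖ = 1 := by
      have he : (-1 : ℚ_[p]) - 1 = -2 := by ring
      rw [he, norm_neg, h2norm]
    rw [h21] at hcl
    exact lt_irrefl _ hcl
  have hq1 : (1 : ℚ_[p]) + q ≠ 0 := by
    intro h
    have hqm : q = -1 := eq_neg_of_add_eq_zero_right h
    rw [hqm] at hq
    have he : (1 : ℚ_[p]) - (-1) = 2 := by ring
    rw [he, h2norm] at hq
    exact lt_irrefl _ hq
  -- rewrite each term of the sequence
  have heq : ∀ N : ℕ,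
      ((1 + q) / (1 - (-q) ^ (p ^ N))) *
          ∑ y ∈ range (p ^ N), ((x + (y : ℤ_[p]) : ℤ_[p]) : ℚ_[p]) ^ n * (-q) ^ y
        = (G (x : ℚ_[p]) - (-q) ^ (p ^ N) * G ((x : ℚ_[p]) + ((p ^ N : ℕ) : ℚ_[p])))
            / (1 - (-q) ^ (p ^ N)) := by
    intro N
    have hsum : (∑ y ∈ range (p ^ N), ((x + (y : ℤ_[p]) : ℤ_[p]) : ℚ_[p]) ^ n * (-q) ^ y)
        = ∑ y ∈ range (p ^ N), ((x : ℚ_[p]) + (y : ℚ_[p])) ^ n * (-q) ^ y := by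
      apply Finset.sum_congr rfl
      intro y _
      push_cast
      ring
    have ht := telescope q E hE0 hE n (x : ℚ_[p]) (p ^ N)
    rw [div_mul_eq_mul_div, hsum, ht]
  rw [show (∑ k ∈ range (n + 1), (n.choose k : ℚ_[p]) * E k * ((x : ℚ_[p]) ^ (n - k)))
      = G (x : ℚ_[p]) from rfl]
  -- limits
  have hA : Tendsto (fun N : ℕ => (-q) ^ p ^ N) atTop (nhds (-1)) := by
    have h1 := (aux_tendsto_pow hq).neg
    simp only [hoddpow]
    exact h1
  have hB : Tendsto (fun N : ℕ => (x : ℚ_[p]) + ((p ^ N : ℕ) : ℚ_[p])) atTop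
      (nhds (x : ℚ_[p])) := by
    have h0 : Tendsto (fun N : ℕ => ((p : ℚ_[p])) ^ N) atTop (nhds 0) :=
      tendsto_pow_atTop_nhds_zero_of_norm_lt_one Padic.norm_p_lt_one
    have := ((tendsto_const_nhds : Tendsto (fun _ : ℕ => (x : ℚ_[p])) atTop (nhds (x : ℚ_[p])))).add h0
    simp only [add_zero] at this
    refine this.congr ?_
    intro N
    push_cast
    rfl
  have hGcont : Continuous G := by
    apply continuous_finset_sum
    intro k _
    exact continuous_const.mul (continuous_pow _)
  have hBC : Tendsto (fun N : ℕ => G ((x : ℚ_[p]) + ((p ^ N : ℕ) : ℚ_[p]))) atTop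
      (nhds (G (x : ℚ_[p]))) := (hGcont.tendsto _).comp hB
  have hne2 : (1 : ℚ_[p]) - (-1) ≠ 0 := by norm_num
  have hfin := Tendsto.div
    ((tendsto_const_nhds : Tendsto (fun _ : ℕ => G (x : ℚ_[p])) atTop
        (nhds (G (x : ℚ_[p])))).sub (hA.mul hBC))
    ((tendsto_const_nhds : Tendsto (fun _ : ℕ => (1 : ℚ_[p])) atTop (nhds 1)).sub hA) hne2
  have hval : (G (x : ℚ_[p]) - (-1) * G (x : ℚ_[p])) / ((1 : ℚ_[p]) - (-1)) = G (x : ℚ_[p]) := by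
    rw [div_eq_iff hne2]; ring
  rw [hval] at hfin
  exact hfin.congr fun N => (heq N).symm
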